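/- Let A_R > 0, A_T > 0, β_R > 0, β_T > 0, B_R > 0, B_T > 0 and r > 0, and suppose R > 0 satisfies the rate-balance equation (B_R/2)·log₂(1 + A_R·r^{−β_R}) = (B_T/2)·log₂(1 + A_T·exp(−β_T R)/R²). Then, with D = (1 + A_R·r^{−β_R})^{B_R/B_T} − 1 (which is strictly positive), R satisfies (β_T R/2)·exp(β_T R/2) = (β_T/2)·(A_T/D)^{1/2}; equivalently R = (2/β_T)·𝒲((β_T/2)·(D/A_T)^{−1/2}), where 𝒲 is the inverse of m ↦ m e^m on [0, ∞). -/

import Mathlib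

open Real

private lemma mexp_inj (a b : ℝ) (ha : 0 ≤ a) (hb : 0 ≤ b)
    (h : a * Real.exp a = b * Real.exp b) : a = b := by
  rcases lt_trichotomy a b with h1 | h1 | h1
  · exfalso
    have h2 : Real.exp a ≤ Real.exp b := (Real.exp_le_exp.2 h1.le)
    nlinarith [mul_nonneg ha (sub_nonneg.2 h2), mul_pos (sub_pos.2 h1) (Real.exp_pos b)]
  · exact h1
  · exfalso
    have h2 : Real.exp b ≤ Real.exp a := (Real.exp_le_exp.2 h1.le)
    nlinarith [mul_nonneg hb (sub_nonneg.2 h2), mul_pos (sub_pos.2 h1) (Real.exp_pos a)]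

/-- Characterization of the critical distance `R_{R2T}(r)` (Lemma 3 of the paper): if a
THz relay at distance `R` provides the same average achievable rate as an RF relay at
distance `r`, then with `D = (1 + A_R r^{−β_R})^{B_R/B_T} − 1 > 0`, `R` satisfies
`(β_T R/2)·e^{β_T R/2} = (β_T/2)·(A_T/D)^{1/2}`; equivalently
`R = (2/β_T)·𝒲((β_T/2)·(D/A_T)^{−1/2})` for any function `𝒲` inverse to `m ↦ m·e^m`
on the nonnegative reals. -/
theorem critical_distance_R2T (AR AT βR βT BR BT r R : ℝ)
    (hAR : 0 < AR) (hAT : 0 < AT) (hβR : 0 < βR) (hβT : 0 < βT)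
    (hBR : 0 < BR) (hBT : 0 < BT) (hr : 0 < r) (hR : 0 < R)
    (hbal : BR / 2 * Real.logb 2 (1 + AR * r ^ (-βR)) =
        BT / 2 * Real.logb 2 (1 + AT * Real.exp (-βT * R) / R ^ 2)) :
    0 < (1 + AR * r ^ (-βR)) ^ (BR / BT) - 1 ∧
      βT * R / 2 * Real.exp (βT * R / 2) =
        βT / 2 * (AT / ((1 + AR * r ^ (-βR)) ^ (BR / BT) - 1)) ^ ((1:ℝ) / 2) ∧
      ∀ W : ℝ → ℝ, (∀ y : ℝ, 0 ≤ y → 0 ≤ W y ∧ W y * Real.exp (W y) = y) →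
        R = 2 / βT *
          W (βT / 2 * (((1 + AR * r ^ (-βR)) ^ (BR / BT) - 1) / AT) ^ (-(1:ℝ) / 2)) := by
  set X : ℝ := 1 + AR * r ^ (-βR) with hXdef
  set Y : ℝ := 1 + AT * Real.exp (-βT * R) / R ^ 2 with hYdef
  have hXpos : (0:ℝ) < X := by
    have : 0 < AR * r ^ (-βR) := mul_pos hAR (Real.rpow_pos_of_pos hr _)
    linarith
  have hq : 0 < AT * Real.exp (-βT * R) / R ^ 2 :=
    div_pos (mul_pos hAT (Real.exp_pos _)) (by positivity)
  have hYpos : (0:ℝ) < Y := by rw [hYdef]; linarith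
  -- From the balance equation: X ^ (BR/BT) = Y
  have hXY : X ^ (BR / BT) = Y := by
    have h1 : (BR / BT) * Real.logb 2 X = Real.logb 2 Y := by
      field_simp at hbal ⊢
      linarith [hbal]
    have h2 : Real.logb 2 (X ^ (BR / BT)) = Real.logb 2 Y := by
      rw [Real.logb_rpow_eq_mul_logb_of_pos hXpos]
      exact h1
    have hXr : (0:ℝ) < X ^ (BR / BT) := Real.rpow_pos_of_pos hXpos _
    have := Real.logb_injOn_pos (by norm_num : (1:ℝ) < 2)
      (Set.mem_Ioi.2 hXr) (Set.mem_Ioi.2 hYpos) h2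
    exact this
  have hD : X ^ (BR / BT) - 1 = AT * Real.exp (-βT * R) / R ^ 2 := by
    rw [hXY]; ring
  have hDpos : 0 < X ^ (BR / BT) - 1 := by rw [hD]; exact hq
  -- AT / D = R^2 * exp (βT R)
  have hAD : AT / (X ^ (BR / BT) - 1) = (R * Real.exp (βT * R / 2)) ^ 2 := by
    rw [hD]
    have hee : Real.exp (-βT * R) * Real.exp (βT * R) = 1 := by
      rw [← Real.exp_add]; simp
    have h2 : (R * Real.exp (βT * R / 2)) ^ 2 = R ^ 2 * Real.exp (βT * R) := by
      rw [mul_pow, sq (Real.exp (βT * R / 2)), ← Real.exp_add]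
      ring_nf
    rw [h2, div_eq_iff (ne_of_gt hq)]
    have hee2 : Real.exp (-(βT * R)) = Real.exp (-βT * R) := by rw [neg_mul]
    field_simp
    have hee3 : Real.exp (βT * R) * Real.exp (-(βT * R)) = 1 := by
      rw [← Real.exp_add]; simp
    linear_combination (norm := ring_nf) -hee3
  have haex : 0 ≤ R * Real.exp (βT * R / 2) := by positivity
  have hsq : (((R * Real.exp (βT * R / 2)) ^ 2 : ℝ)) ^ ((1:ℝ)/2) = R * Real.exp (βT * R / 2) := by
    rw [← Real.rpow_natCast (R * Real.exp (βT * R / 2)) 2, ← Real.rpow_mul haex]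
    norm_num
  have hmain : βT * R / 2 * Real.exp (βT * R / 2) =
      βT / 2 * (AT / (X ^ (BR / BT) - 1)) ^ ((1:ℝ) / 2) := by
    rw [hAD, hsq]; ring
  refine ⟨hDpos, hmain, ?_⟩
  intro W hW
  have hneg : ((X ^ (BR / BT) - 1) / AT) ^ (-(1:ℝ) / 2) =
      (AT / (X ^ (BR / BT) - 1)) ^ ((1:ℝ) / 2) := by
    rw [neg_div, Real.rpow_neg (by positivity), ← Real.inv_rpow (by positivity),
      inv_div]
  set y : ℝ := βT / 2 * ((X ^ (BR / BT) - 1) / AT) ^ (-(1:ℝ) / 2) with hydef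
  have hyval : y = βT * R / 2 * Real.exp (βT * R / 2) := by
    rw [hydef, hneg, ← hmain]
  have hynn : 0 ≤ y := by rw [hyval]; positivity
  obtain ⟨hW0, hWeq⟩ := hW y hynn
  have hWy : W y = βT * R / 2 := by
    apply mexp_inj _ _ hW0 (by positivity)
    rw [hWeq, hyval]
  rw [hWy]
  field_simp
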